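/- arXiv:1808.01992 — 4 statements merged into one kernel-verified Lean document; each statement's English description precedes it below -/
import Mathlib

section
/- Let S be a finite set, σ : S → (0,1), and y : S → {0,1} with edge set Y = {q | y q = 1}. Among all labelings ŷ with exactly |Y| positive pixels, the cross-entropy cost C(ŷ) = -∑_p [ŷ p log σ p + (1 - ŷ p) log(1 - σ p)] is minimized by ŷ* if and only if ŷ* = f_L(y, m*) for some injection m* : Y → S minimizing ∑_{q∈Y} [log(1 - σ(m q)) - log(σ(m q))] over all injections m : Y → S. In particular, min over such ŷ of C(ŷ) equals C(0) + min over injections m of ∑_{q∈Y}[log(1 - σ(m q)) - log σ(m q)]. -/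
open scoped Classical BigOperators
open Real

noncomputable def gcost {S : Type*} (σ : S → ℝ) (p : S) : ℝ :=
  Real.log (1 - σ p) - Real.log (σ p)

lemma CE_rewrite {S : Type*} [Fintype S] (σ : S → ℝ) (yhat : S → Bool) :
    -(∑ p : S, ((if yhat p then (1 : ℝ) else 0) * Real.log (σ p)
        + (1 - if yhat p then (1 : ℝ) else 0) * Real.log (1 - σ p)))
    = -(∑ p : S, Real.log (1 - σ p))
      + ∑ p ∈ Finset.univ.filter (fun p => yhat p = true), gcost σ p := by
  rw [Finset.sum_filter, ← Finset.sum_neg_distrib, ← Finset.sum_neg_distrib,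
    ← Finset.sum_add_distrib]
  refine Finset.sum_congr rfl fun p _ => ?_
  by_cases h : yhat p = true <;> simp [h, gcost] <;> ring

lemma sum_image_inj {S : Type*} [Fintype S] [DecidableEq S] (σ : S → ℝ) {T : Type*}
    [Fintype T] (m : T → S) (hm : Function.Injective m) :
    ∑ p ∈ Finset.univ.image m, gcost σ p = ∑ q : T, gcost σ (m q) :=
  Finset.sum_image (fun a _ b _ h => hm h)

lemma card_image_inj {S : Type*} [Fintype S] [DecidableEq S] {T : Type*}
    [Fintype T] (m : T → S) (hm : Function.Injective m) :
    (Finset.univ.image m).card = Fintype.card T := by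
  rw [Finset.card_image_of_injective _ hm, Finset.card_univ]

lemma exists_inj_with_image {S : Type*} [Fintype S] [DecidableEq S] {T : Type*}
    [Fintype T] (F : Finset S) (hcard : F.card = Fintype.card T) :
    ∃ m : T → S, Function.Injective m ∧ ∀ p : S, p ∈ F ↔ ∃ q, m q = p := by
  have : Fintype.card T = Fintype.card {p // p ∈ F} := by
    rw [Fintype.card_coe]; omega
  obtain ⟨e⟩ := Fintype.card_eq.mp this
  refine ⟨fun q => (e q : S), Subtype.val_injective.comp e.injective, fun p => ?_⟩
  constructor
  · intro hp; exact ⟨e.symm ⟨p, hp⟩, by simp⟩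
  · rintro ⟨q, rfl⟩; exact (e q).2

/-- Lemma 2 of the paper: among labelings with exactly `|Y|` positive
pixels, the cross-entropy is minimized exactly by label realizations of injections
minimizing the assignment cost `∑_q [log(1-σ(m q)) - log σ(m q)]`; moreover the
constrained minimum of the cross-entropy equals `C(0)` plus the minimal assignment
cost. -/
theorem cross_entropy_min_iff_assignment {S : Type*} [Fintype S] [DecidableEq S]
    (σ : S → ℝ) (hσ : ∀ p, σ p ∈ Set.Ioo (0 : ℝ) 1) (y : S → Bool) :
    (∀ ystar : S → Bool,
      (Finset.univ.filter (fun p => ystar p = true)).card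
        = (Finset.univ.filter (fun q => y q = true)).card →
      ((∀ yhat : S → Bool,
          (Finset.univ.filter (fun p => yhat p = true)).card
            = (Finset.univ.filter (fun q => y q = true)).card →
          -(∑ p : S, ((if ystar p then (1 : ℝ) else 0) * Real.log (σ p)
              + (1 - if ystar p then (1 : ℝ) else 0) * Real.log (1 - σ p)))
          ≤ -(∑ p : S, ((if yhat p then (1 : ℝ) else 0) * Real.log (σ p)
              + (1 - if yhat p then (1 : ℝ) else 0) * Real.log (1 - σ p)))) ↔
        (∃ mstar : {q : S // y q = true} → S, Function.Injective mstar ∧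
          (∀ m : {q : S // y q = true} → S, Function.Injective m →
            ∑ q : {q : S // y q = true},
                (Real.log (1 - σ (mstar q)) - Real.log (σ (mstar q)))
            ≤ ∑ q : {q : S // y q = true},
                (Real.log (1 - σ (m q)) - Real.log (σ (m q)))) ∧
          (∀ p : S, ystar p = true ↔ ∃ q, mstar q = p))))
    ∧
    sInf {c : ℝ | ∃ yhat : S → Bool,
        (Finset.univ.filter (fun p => yhat p = true)).card
          = (Finset.univ.filter (fun q => y q = true)).card ∧
        c = -(∑ p : S, ((if yhat p then (1 : ℝ) else 0) * Real.log (σ p)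
              + (1 - if yhat p then (1 : ℝ) else 0) * Real.log (1 - σ p)))}
    = -(∑ p : S, Real.log (1 - σ p))
      + sInf {c : ℝ | ∃ m : {q : S // y q = true} → S, Function.Injective m ∧
          c = ∑ q : {q : S // y q = true},
                (Real.log (1 - σ (m q)) - Real.log (σ (m q)))} := by
  classical
  set Y := {q : S // y q = true}
  set n := (Finset.univ.filter (fun q => y q = true)).card with hn
  have hcardY : Fintype.card Y = n := Fintype.card_subtype _
  -- assignment cost as gcost sum
  have hasg : ∀ m : Y → S, ∑ q : Y, (Real.log (1 - σ (m q)) - Real.log (σ (m q)))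
      = ∑ q : Y, gcost σ (m q) := fun m => rfl
  -- For an injection m, the indicator labeling
  have hindic : ∀ m : Y → S, Function.Injective m →
      ∃ yhat : S → Bool,
        (Finset.univ.filter (fun p => yhat p = true)).card = n ∧
        (Finset.univ.filter (fun p => yhat p = true)) = Finset.univ.image m ∧
        ∑ p ∈ Finset.univ.filter (fun p => yhat p = true), gcost σ p
          = ∑ q : Y, gcost σ (m q) := by
    intro m hm
    refine ⟨fun p => decide (p ∈ Finset.univ.image m), ?_, ?_, ?_⟩
    · have : (Finset.univ.filter (fun p => decide (p ∈ Finset.univ.image m) = true))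
          = Finset.univ.image m := by
        ext p; simp
      rw [this, card_image_inj m hm, hcardY]
    · ext p; simp
    · have : (Finset.univ.filter (fun p => decide (p ∈ Finset.univ.image m) = true))
          = Finset.univ.image m := by
        ext p; simp
      rw [this, sum_image_inj σ m hm]
  -- minimizing injection exists
  obtain ⟨m0, hm0mem, hm0min⟩ :=
    Finset.exists_min_image (Finset.univ.filter (fun m : Y → S => Function.Injective m))
      (fun m => ∑ q : Y, gcost σ (m q))
      ⟨Subtype.val, Finset.mem_filter.mpr ⟨Finset.mem_univ _, Subtype.val_injective⟩⟩
  have hm0inj : Function.Injective m0 := (Finset.mem_filter.mp hm0mem).2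
  have hm0min' : ∀ m : Y → S, Function.Injective m →
      ∑ q : Y, gcost σ (m q) ≥ ∑ q : Y, gcost σ (m0 q) := fun m hm =>
    hm0min m (by simp [hm])
  constructor
  · intro ystar hcard
    constructor
    · -- forward
      intro hmin
      obtain ⟨m1, hm1inj, hm1im⟩ :=
        exists_inj_with_image (T := Y)
          (Finset.univ.filter (fun p => ystar p = true)) (by rw [hcard, hcardY])
      have him : (Finset.univ.filter (fun p => ystar p = true)) = Finset.univ.image m1 := by
        ext p
        simp only [Finset.mem_image, Finset.mem_univ, true_and]
        exact (hm1im p).trans ⟨fun ⟨q, h⟩ => ⟨q, h⟩, fun ⟨q, h⟩ => ⟨q, h⟩⟩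
      have hsum1 : ∑ p ∈ Finset.univ.filter (fun p => ystar p = true), gcost σ p
          = ∑ q : Y, gcost σ (m1 q) := by rw [him, sum_image_inj σ m1 hm1inj]
      refine ⟨m1, hm1inj, ?_, ?_⟩
      · intro m hm
        obtain ⟨yhat, hyc, _, hys⟩ := hindic m hm
        have := hmin yhat hyc
        rw [CE_rewrite σ ystar, CE_rewrite σ yhat] at this
        rw [hasg, hasg, ← hsum1, ← hys]
        linarith
      · intro p
        rw [← hm1im p]
        simp
    · -- backward
      rintro ⟨mstar, hminj, hmmin, hmim⟩ yhat hyc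
      have him : (Finset.univ.filter (fun p => ystar p = true)) = Finset.univ.image mstar := by
        ext p
        simp only [Finset.mem_filter, Finset.mem_image, Finset.mem_univ, true_and]
        exact (hmim p).trans ⟨fun ⟨q, h⟩ => ⟨q, h⟩, fun ⟨q, h⟩ => ⟨q, h⟩⟩
      have hsumstar : ∑ p ∈ Finset.univ.filter (fun p => ystar p = true), gcost σ p
          = ∑ q : Y, gcost σ (mstar q) := by rw [him, sum_image_inj σ mstar hminj]
      obtain ⟨m2, hm2inj, hm2im⟩ :=
        exists_inj_with_image (T := Y)
          (Finset.univ.filter (fun p => yhat p = true)) (by rw [hyc, hcardY])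
      have him2 : (Finset.univ.filter (fun p => yhat p = true)) = Finset.univ.image m2 := by
        ext p
        simp only [Finset.mem_image, Finset.mem_univ, true_and]
        exact (hm2im p).trans ⟨fun ⟨q, h⟩ => ⟨q, h⟩, fun ⟨q, h⟩ => ⟨q, h⟩⟩
      have hsum2 : ∑ p ∈ Finset.univ.filter (fun p => yhat p = true), gcost σ p
          = ∑ q : Y, gcost σ (m2 q) := by rw [him2, sum_image_inj σ m2 hm2inj]
      rw [CE_rewrite σ ystar, CE_rewrite σ yhat, hsumstar, hsum2]
      have := hmmin m2 hm2inj
      rw [hasg, hasg] at this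
      linarith
  · -- sInf part
    have hleast2 : IsLeast {c : ℝ | ∃ m : Y → S, Function.Injective m ∧
        c = ∑ q : Y, (Real.log (1 - σ (m q)) - Real.log (σ (m q)))}
        (∑ q : Y, gcost σ (m0 q)) := by
      constructor
      · exact ⟨m0, hm0inj, (hasg m0).symm⟩
      · rintro c ⟨m, hm, rfl⟩
        rw [hasg]
        exact hm0min' m hm
    have hleast1 : IsLeast {c : ℝ | ∃ yhat : S → Bool,
        (Finset.univ.filter (fun p => yhat p = true)).card = n ∧
        c = -(∑ p : S, ((if yhat p then (1 : ℝ) else 0) * Real.log (σ p)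
              + (1 - if yhat p then (1 : ℝ) else 0) * Real.log (1 - σ p)))}
        (-(∑ p : S, Real.log (1 - σ p)) + ∑ q : Y, gcost σ (m0 q)) := by
      constructor
      · obtain ⟨yhat, hyc, _, hys⟩ := hindic m0 hm0inj
        exact ⟨yhat, hyc, by rw [CE_rewrite σ yhat, hys]⟩
      · rintro c ⟨yhat, hyc, rfl⟩
        rw [CE_rewrite σ yhat]
        obtain ⟨m2, hm2inj, hm2im⟩ :=
          exists_inj_with_image (T := Y)
            (Finset.univ.filter (fun p => yhat p = true)) (by rw [hyc, hcardY])
        have him2 : (Finset.univ.filter (fun p => yhat p = true)) = Finset.univ.image m2 := by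
          ext p
          simp only [Finset.mem_image, Finset.mem_univ, true_and]
          exact (hm2im p).trans ⟨fun ⟨q, h⟩ => ⟨q, h⟩, fun ⟨q, h⟩ => ⟨q, h⟩⟩
        have hsum2 : ∑ p ∈ Finset.univ.filter (fun p => yhat p = true), gcost σ p
            = ∑ q : Y, gcost σ (m2 q) := by rw [him2, sum_image_inj σ m2 hm2inj]
        rw [hsum2]
        have := hm0min' m2 hm2inj
        linarith
    rw [hleast1.csInf_eq, hleast2.csInf_eq]
end

section
/- Let S be a finite set, Y ⊆ S, and let c : S × Y → ℝ be a cost function depending only on the assigned target and source (e.g., c(p,q) = ‖p - q‖²/(2σ²) + log(1-σ p) - log σ p). Define for each injection m : Y → S the total cost T(m) = ∑_{q∈Y} c(m q, q), and for each labeling ŷ with |{ŷ = 1}| = |Y| define U(ŷ) = D(ŷ) + inf over injections m with image {ŷ = 1} of ∑_{q∈Y} d(m q, q), where c(p,q) = d(p,q) + e(p) and D(ŷ) = ∑_{p : ŷ p = 1} e(p). Then any injection m* minimizing T also yields a labeling f_L(y, m*) minimizing U. (Optimality of the relaxed assignment problem: Theorem 1 of the paper.) -/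
open scoped Classical BigOperators
open Real

/-- Sum of `e` over the finset of points in the range of an injective map equals
the sum of `e ∘ m` over the source. -/
lemma sum_filter_range {S : Type*} [Fintype S] [DecidableEq S] {Y : Finset S}
    (e : S → ℝ) (m : {q : S // q ∈ Y} → S) (hm : Function.Injective m) :
    (∑ p ∈ Finset.univ.filter (fun p => (p ∈ Set.range m : Prop)), e p)
      = ∑ q : {q : S // q ∈ Y}, e (m q) := by
  have : Finset.univ.filter (fun p => (p ∈ Set.range m : Prop))
      = Finset.univ.image m := by
    ext p
    simp [Set.mem_range]
  rw [this, Finset.sum_image (fun a _ b _ h => hm h)]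

/-- Theorem 1 of the paper: if the injection `mstar` minimizes the joint
assignment cost `T(m) = ∑_q [d(m q, q) + e(m q)]`, then the realized labeling
`f_L(y, mstar)` (which is `1` exactly on the range of `mstar`) minimizes
`U(yhat) = ∑_{p : yhat p = 1} e p + inf over injections with image {yhat = 1} of
∑_q d(m q, q)` among all labelings with `|Y|` positive pixels. -/
theorem relaxed_assignment_optimality {S : Type*} [Fintype S] [DecidableEq S]
    (Y : Finset S) (d : S → S → ℝ) (e : S → ℝ)
    (mstar : {q : S // q ∈ Y} → S) (hinj : Function.Injective mstar)
    (hmin : ∀ m : {q : S // q ∈ Y} → S, Function.Injective m →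
      ∑ q : {q : S // q ∈ Y}, (d (mstar q) q.1 + e (mstar q))
        ≤ ∑ q : {q : S // q ∈ Y}, (d (m q) q.1 + e (m q))) :
    ∀ yhat : S → Bool,
      (Finset.univ.filter (fun p => yhat p = true)).card = Y.card →
      (∑ p ∈ Finset.univ.filter (fun p => (p ∈ Set.range mstar : Prop)), e p)
        + sInf {x : ℝ | ∃ m : {q : S // q ∈ Y} → S, Function.Injective m ∧
            Set.range m = Set.range mstar ∧
            x = ∑ q : {q : S // q ∈ Y}, d (m q) q.1}
      ≤ (∑ p ∈ Finset.univ.filter (fun p => yhat p = true), e p)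
        + sInf {x : ℝ | ∃ m : {q : S // q ∈ Y} → S, Function.Injective m ∧
            Set.range m = {p : S | yhat p = true} ∧
            x = ∑ q : {q : S // q ∈ Y}, d (m q) q.1} := by
  intro yhat hcard
  set A : Set ℝ := {x : ℝ | ∃ m : {q : S // q ∈ Y} → S, Function.Injective m ∧
      Set.range m = Set.range mstar ∧ x = ∑ q : {q : S // q ∈ Y}, d (m q) q.1} with hA
  set B : Set ℝ := {x : ℝ | ∃ m : {q : S // q ∈ Y} → S, Function.Injective m ∧
      Set.range m = {p : S | yhat p = true} ∧ x = ∑ q : {q : S // q ∈ Y}, d (m q) q.1}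
    with hB
  -- both sets are finite
  have hsub : ∀ C : Set ℝ, (C = A ∨ C = B) → C.Finite := by
    intro C hC
    have : C ⊆ Set.range (fun m : {q : S // q ∈ Y} → S =>
        ∑ q : {q : S // q ∈ Y}, d (m q) q.1) := by
      rcases hC with rfl | rfl <;>
      · rintro x ⟨m, _, _, rfl⟩
        exact ⟨m, rfl⟩
    exact (Set.finite_range _).subset this
  have hAfin : A.Finite := hsub A (Or.inl rfl)
  have hBfin : B.Finite := hsub B (Or.inr rfl)
  -- B is nonempty: build an injection with range {p | yhat p = true}
  have hBne : B.Nonempty := by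
    have hc : Y.card = (Finset.univ.filter (fun p => yhat p = true)).card := hcard.symm
    let eqv := Finset.equivOfCardEq hc
    refine ⟨∑ q : {q : S // q ∈ Y}, d ((eqv q : S)) q.1,
      fun q => (eqv q : S), ?_, ?_, rfl⟩
    · intro a b h
      exact eqv.injective (Subtype.ext h)
    · ext p
      constructor
      · rintro ⟨q, rfl⟩
        have h2 := (eqv q).2
        simp only [Finset.mem_filter] at h2
        exact h2.2
      · intro hp
        have hp' : p ∈ Finset.univ.filter (fun p => yhat p = true) := by
          simpa using hp
        exact ⟨eqv.symm ⟨p, hp'⟩, by simp⟩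
  -- pick the minimizer of B
  have hBmem : sInf B ∈ B := Set.Nonempty.csInf_mem hBne hBfin
  obtain ⟨m, hm_inj, hm_range, hm_eq⟩ := hBmem
  -- A contains the value for mstar
  have hAmem : (∑ q : {q : S // q ∈ Y}, d (mstar q) q.1) ∈ A :=
    ⟨mstar, hinj, rfl, rfl⟩
  have hAle : sInf A ≤ ∑ q : {q : S // q ∈ Y}, d (mstar q) q.1 :=
    csInf_le hAfin.bddBelow hAmem
  -- sums of e
  have hEstar : (∑ p ∈ Finset.univ.filter (fun p => (p ∈ Set.range mstar : Prop)), e p)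
      = ∑ q : {q : S // q ∈ Y}, e (mstar q) := sum_filter_range e mstar hinj
  have hfilt : Finset.univ.filter (fun p => yhat p = true)
      = Finset.univ.filter (fun p => (p ∈ Set.range m : Prop)) := by
    ext p
    simp [hm_range]
  have hEm : (∑ p ∈ Finset.univ.filter (fun p => yhat p = true), e p)
      = ∑ q : {q : S // q ∈ Y}, e (m q) := by
    rw [hfilt]; exact sum_filter_range e m hm_inj
  have key := hmin m hm_inj
  rw [Finset.sum_add_distrib, Finset.sum_add_distrib] at key
  rw [hEstar, hEm, hm_eq]
  linarith
end

section
/- Let S ⊆ ℝ² be finite, Y ⊆ S, σ : S → (0,1), σ₀ > 0, and define for each injection m : Y → S the cost E(m) = ∑_{q∈Y} [‖m q - q‖²/(2σ₀²) + log(1 - σ(m q)) - log σ(m q)]. Then the negative log-likelihood -log L(ŷ, W) of the SEAL objective, restricted to labelings ŷ with |{ŷ=1}| = |Y|, satisfies: min over ŷ of [inf over matchings of the distance term + cross-entropy C(ŷ)] = C(0) + min over injections m of E(m), where C(0) = -∑_{p∈S} log(1-σ p). -/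
open scoped Classical BigOperators
open Real

private lemma seal_ce_decomp (S : Finset (EuclideanSpace ℝ (Fin 2)))
    (σ : EuclideanSpace ℝ (Fin 2) → ℝ) (yhat : EuclideanSpace ℝ (Fin 2) → Bool) :
    -(∑ p ∈ S, ((if yhat p then (1 : ℝ) else 0) * Real.log (σ p)
        + (1 - if yhat p then (1 : ℝ) else 0) * Real.log (1 - σ p)))
    = -(∑ p ∈ S, Real.log (1 - σ p))
      + ∑ p ∈ S.filter (fun p => yhat p = true),
          (Real.log (1 - σ p) - Real.log (σ p)) := by
  have h : ∀ p ∈ S, ((if yhat p then (1 : ℝ) else 0) * Real.log (σ p)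
        + (1 - if yhat p then (1 : ℝ) else 0) * Real.log (1 - σ p))
      = Real.log (1 - σ p)
        + (if yhat p = true then (Real.log (σ p) - Real.log (1 - σ p)) else 0) := by
    intro p _
    by_cases hp : yhat p = true <;> simp [hp] <;> ring
  rw [Finset.sum_congr rfl h, Finset.sum_add_distrib, ← Finset.sum_filter]
  have h2 : ∑ p ∈ S.filter (fun p => yhat p = true),
      (Real.log (1 - σ p) - Real.log (σ p))
      = -∑ p ∈ S.filter (fun p => yhat p = true),
          (Real.log (σ p) - Real.log (1 - σ p)) := by
    rw [← Finset.sum_neg_distrib]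
    exact Finset.sum_congr rfl (fun p _ => by ring)
  rw [h2]; ring

/-- the constrained two-level SEAL minimization (over labelings with the
same number of positives as `Y`, adding the best matching distance cost to the
cross-entropy) equals `C(0)` plus the optimal value of the single min-cost assignment
problem with costs `E(m)`. -/
theorem seal_objective_eq_assignment (S : Finset (EuclideanSpace ℝ (Fin 2)))
    (Y : Finset (EuclideanSpace ℝ (Fin 2))) (hYS : Y ⊆ S)
    (σ : EuclideanSpace ℝ (Fin 2) → ℝ) (hσ : ∀ p ∈ S, σ p ∈ Set.Ioo (0 : ℝ) 1)
    (σ₀ : ℝ) (hσ₀ : 0 < σ₀) :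
    sInf {u : ℝ | ∃ yhat : EuclideanSpace ℝ (Fin 2) → Bool,
        (S.filter (fun p => yhat p = true)).card = Y.card ∧
        u = sInf {x : ℝ | ∃ m : {q // q ∈ Y} ≃ {p // p ∈ S.filter (fun p => yhat p = true)},
              x = ∑ q : {q // q ∈ Y},
                ‖(m q : EuclideanSpace ℝ (Fin 2)) - (q : EuclideanSpace ℝ (Fin 2))‖ ^ 2
                  / (2 * σ₀ ^ 2)}
          + -(∑ p ∈ S, ((if yhat p then (1 : ℝ) else 0) * Real.log (σ p)
              + (1 - if yhat p then (1 : ℝ) else 0) * Real.log (1 - σ p)))}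
    = -(∑ p ∈ S, Real.log (1 - σ p))
      + sInf {x : ℝ | ∃ m : {q // q ∈ Y} → EuclideanSpace ℝ (Fin 2),
          Function.Injective m ∧ (∀ q, m q ∈ S) ∧
          x = ∑ q : {q // q ∈ Y},
            (‖m q - (q : EuclideanSpace ℝ (Fin 2))‖ ^ 2 / (2 * σ₀ ^ 2)
              + Real.log (1 - σ (m q)) - Real.log (σ (m q)))} := by
  classical
  set C0 : ℝ := -(∑ p ∈ S, Real.log (1 - σ p)) with hC0
  -- abbreviations
  set Ecost : ({q // q ∈ Y} → EuclideanSpace ℝ (Fin 2)) → ℝ :=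
    fun m => ∑ q : {q // q ∈ Y},
      (‖m q - (q : EuclideanSpace ℝ (Fin 2))‖ ^ 2 / (2 * σ₀ ^ 2)
        + Real.log (1 - σ (m q)) - Real.log (σ (m q))) with hEcost
  set B : Set ℝ := {x : ℝ | ∃ m : {q // q ∈ Y} → EuclideanSpace ℝ (Fin 2),
      Function.Injective m ∧ (∀ q, m q ∈ S) ∧ x = Ecost m} with hB
  set A : Set ℝ := {u : ℝ | ∃ yhat : EuclideanSpace ℝ (Fin 2) → Bool,
      (S.filter (fun p => yhat p = true)).card = Y.card ∧
      u = sInf {x : ℝ | ∃ m : {q // q ∈ Y} ≃ {p // p ∈ S.filter (fun p => yhat p = true)},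
            x = ∑ q : {q // q ∈ Y},
              ‖(m q : EuclideanSpace ℝ (Fin 2)) - (q : EuclideanSpace ℝ (Fin 2))‖ ^ 2
                / (2 * σ₀ ^ 2)}
        + -(∑ p ∈ S, ((if yhat p then (1 : ℝ) else 0) * Real.log (σ p)
            + (1 - if yhat p then (1 : ℝ) else 0) * Real.log (1 - σ p)))} with hA
  have hsplit : ∀ m : {q // q ∈ Y} → EuclideanSpace ℝ (Fin 2),
      Ecost m = (∑ q : {q // q ∈ Y},
          ‖m q - (q : EuclideanSpace ℝ (Fin 2))‖ ^ 2 / (2 * σ₀ ^ 2))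
        + ∑ q : {q // q ∈ Y}, (Real.log (1 - σ (m q)) - Real.log (σ (m q))) := by
    intro m
    rw [hEcost, ← Finset.sum_add_distrib]
    exact Finset.sum_congr rfl (fun q _ => by ring)
  -- B is finite and nonempty
  have hBfin : B.Finite := by
    have hsub : B ⊆ Ecost '' {m | ∀ q, m q ∈ (S : Set (EuclideanSpace ℝ (Fin 2)))} := by
      rintro x ⟨m, _, hmem, rfl⟩
      exact ⟨m, fun q => hmem q, rfl⟩
    have hfin : ({m : {q // q ∈ Y} → EuclideanSpace ℝ (Fin 2) |
        ∀ q, m q ∈ (S : Set (EuclideanSpace ℝ (Fin 2)))}).Finite := by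
      have := Set.Finite.pi (fun _ : {q // q ∈ Y} => S.finite_toSet)
      apply this.subset
      intro m hm
      exact fun q _ => hm q
    exact (hfin.image Ecost).subset hsub
  have hBne : B.Nonempty := by
    refine ⟨Ecost (fun q => (q : EuclideanSpace ℝ (Fin 2))),
      fun q => (q : EuclideanSpace ℝ (Fin 2)), ?_, fun q => hYS q.2, rfl⟩
    exact fun a b h => Subtype.ext h
  -- key construction 1 : from an injection m into S, an element of A of value C0 + Ecost m
  have key1 : ∀ m : {q // q ∈ Y} → EuclideanSpace ℝ (Fin 2),
      Function.Injective m → (∀ q, m q ∈ S) → ∃ u ∈ A, u ≤ C0 + Ecost m := by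
    intro m hminj hmS
    set T : Finset (EuclideanSpace ℝ (Fin 2)) := Finset.image m Finset.univ with hT
    have hTS : T ⊆ S := by
      intro p hp
      rcases Finset.mem_image.mp hp with ⟨q, _, rfl⟩
      exact hmS q
    have hTcard : T.card = Y.card := by
      rw [hT, Finset.card_image_of_injective _ hminj, Finset.card_univ, Fintype.card_coe]
    set yhat : EuclideanSpace ℝ (Fin 2) → Bool := fun p => decide (p ∈ T) with hyhat
    have hfilter : S.filter (fun p => yhat p = true) = T := by
      ext p
      simp only [Finset.mem_filter, hyhat, decide_eq_true_eq]
      exact ⟨fun h => h.2, fun h => ⟨hTS h, h⟩⟩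
    -- the value in A for this yhat
    set X : Set ℝ := {x : ℝ | ∃ e : {q // q ∈ Y} ≃ {p // p ∈ S.filter (fun p => yhat p = true)},
        x = ∑ q : {q // q ∈ Y},
          ‖(e q : EuclideanSpace ℝ (Fin 2)) - (q : EuclideanSpace ℝ (Fin 2))‖ ^ 2
            / (2 * σ₀ ^ 2)} with hX
    have hXfin : X.Finite := by
      apply Set.Finite.subset (Set.finite_range
        (fun e : {q // q ∈ Y} ≃ {p // p ∈ S.filter (fun p => yhat p = true)} =>
          ∑ q : {q // q ∈ Y},
            ‖(e q : EuclideanSpace ℝ (Fin 2)) - (q : EuclideanSpace ℝ (Fin 2))‖ ^ 2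
              / (2 * σ₀ ^ 2)))
      rintro x ⟨e, rfl⟩
      exact ⟨e, rfl⟩
    -- build the equivalence induced by m
    have hmemT : ∀ q : {q // q ∈ Y}, m q ∈ S.filter (fun p => yhat p = true) := by
      intro q; rw [hfilter]; exact Finset.mem_image_of_mem m (Finset.mem_univ q)
    set f : {q // q ∈ Y} → {p // p ∈ S.filter (fun p => yhat p = true)} :=
      fun q => ⟨m q, hmemT q⟩ with hf
    have hfinj : Function.Injective f := by
      intro a b h
      exact hminj (congrArg Subtype.val h)
    have hcard : Fintype.card {q // q ∈ Y}
        = Fintype.card {p // p ∈ S.filter (fun p => yhat p = true)} := by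
      rw [Fintype.card_coe, Fintype.card_coe, hfilter, hTcard]
    have hfbij : Function.Bijective f :=
      (Fintype.bijective_iff_injective_and_card f).mpr ⟨hfinj, hcard⟩
    set e : {q // q ∈ Y} ≃ {p // p ∈ S.filter (fun p => yhat p = true)} :=
      Equiv.ofBijective f hfbij with he
    have hXmem : (∑ q : {q // q ∈ Y},
        ‖m q - (q : EuclideanSpace ℝ (Fin 2))‖ ^ 2 / (2 * σ₀ ^ 2)) ∈ X := by
      refine ⟨e, ?_⟩
      apply Finset.sum_congr rfl
      intro q _
      rfl
    have hXinf : sInf X ≤ ∑ q : {q // q ∈ Y},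
        ‖m q - (q : EuclideanSpace ℝ (Fin 2))‖ ^ 2 / (2 * σ₀ ^ 2) :=
      csInf_le hXfin.bddBelow hXmem
    -- cross entropy value
    have hce : -(∑ p ∈ S, ((if yhat p then (1 : ℝ) else 0) * Real.log (σ p)
        + (1 - if yhat p then (1 : ℝ) else 0) * Real.log (1 - σ p)))
        = C0 + ∑ q : {q // q ∈ Y}, (Real.log (1 - σ (m q)) - Real.log (σ (m q))) := by
      rw [seal_ce_decomp S σ yhat, hfilter, hC0]
      congr 1
      rw [hT, Finset.sum_image (fun a _ b _ h => hminj h)]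
    refine ⟨sInf X + -(∑ p ∈ S, ((if yhat p then (1 : ℝ) else 0) * Real.log (σ p)
        + (1 - if yhat p then (1 : ℝ) else 0) * Real.log (1 - σ p))), ?_, ?_⟩
    · exact ⟨yhat, by rw [hfilter]; exact hTcard, rfl⟩
    · rw [hce]
      have hs := hsplit m
      linarith [hXinf]
  -- key fact 2 : every element of A is ≥ C0 + sInf B
  have key2 : ∀ u ∈ A, C0 + sInf B ≤ u := by
    rintro u ⟨yhat, hcard, rfl⟩
    set P := S.filter (fun p => yhat p = true) with hP
    set X : Set ℝ := {x : ℝ | ∃ e : {q // q ∈ Y} ≃ {p // p ∈ P},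
        x = ∑ q : {q // q ∈ Y},
          ‖(e q : EuclideanSpace ℝ (Fin 2)) - (q : EuclideanSpace ℝ (Fin 2))‖ ^ 2
            / (2 * σ₀ ^ 2)} with hX
    have hXfin : X.Finite := by
      apply Set.Finite.subset (Set.finite_range
        (fun e : {q // q ∈ Y} ≃ {p // p ∈ P} =>
          ∑ q : {q // q ∈ Y},
            ‖(e q : EuclideanSpace ℝ (Fin 2)) - (q : EuclideanSpace ℝ (Fin 2))‖ ^ 2
              / (2 * σ₀ ^ 2)))
      rintro x ⟨e, rfl⟩
      exact ⟨e, rfl⟩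
    have hXne : X.Nonempty := by
      have hcard' : Fintype.card {q // q ∈ Y} = Fintype.card {p // p ∈ P} := by
        rw [Fintype.card_coe, Fintype.card_coe, hcard]
      exact ⟨_, Fintype.equivOfCardEq hcard', rfl⟩
    obtain ⟨e, hee⟩ := hXne.csInf_mem hXfin
    set m : {q // q ∈ Y} → EuclideanSpace ℝ (Fin 2) := fun q => (e q : EuclideanSpace ℝ (Fin 2))
      with hm
    have hminj : Function.Injective m := by
      intro a b h
      exact e.injective (Subtype.ext h)
    have hmS : ∀ q, m q ∈ S := fun q => (Finset.mem_filter.mp (e q).2).1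
    have hmem : Ecost m ∈ B := ⟨m, hminj, hmS, rfl⟩
    have hBle : sInf B ≤ Ecost m := csInf_le hBfin.bddBelow hmem
    -- rewrite the value
    have hsum : ∑ p ∈ P, (Real.log (1 - σ p) - Real.log (σ p))
        = ∑ q : {q // q ∈ Y}, (Real.log (1 - σ (m q)) - Real.log (σ (m q))) := by
      rw [← Finset.sum_coe_sort P (fun p => Real.log (1 - σ p) - Real.log (σ p))]
      exact (Equiv.sum_comp e (fun p => Real.log (1 - σ (p : EuclideanSpace ℝ (Fin 2)))
        - Real.log (σ (p : EuclideanSpace ℝ (Fin 2))))).symm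
    have hdist : sInf X = ∑ q : {q // q ∈ Y},
        ‖m q - (q : EuclideanSpace ℝ (Fin 2))‖ ^ 2 / (2 * σ₀ ^ 2) := hee
    have hce := seal_ce_decomp S σ yhat
    have hs := hsplit m
    rw [← hP, ← hC0] at hce
    rw [hce, hdist]
    linarith [hBle, hsum]
  -- A nonempty
  have hAne : A.Nonempty := by
    obtain ⟨u, hu, _⟩ := key1 (fun q => (q : EuclideanSpace ℝ (Fin 2)))
      (fun a b h => Subtype.ext h) (fun q => hYS q.2)
    exact ⟨u, hu⟩
  have hAbdd : BddBelow A := ⟨C0 + sInf B, fun u hu => key2 u hu⟩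
  apply le_antisymm
  · -- sInf A ≤ C0 + sInf B
    obtain ⟨m, hminj, hmS, hmval⟩ := hBne.csInf_mem hBfin
    obtain ⟨u, huA, hule⟩ := key1 m hminj hmS
    calc sInf A ≤ u := csInf_le hAbdd huA
      _ ≤ C0 + Ecost m := hule
      _ = C0 + sInf B := by rw [← hmval]
  · exact le_csInf hAne key2
end

section
/- Let h ∈ (0,1) and consider the weighted binary cross-entropy with positive-class weight β > 1: ℓ(ŷ, h) = -β ŷ log h - (1-ŷ) log(1-h). For a pixel with true label ŷ = 0, the prediction h* minimizing the expected loss when the label is flipped to 1 with probability ε ∈ (0,1) (label noise) is h* = βε/(βε + 1 - ε), which is strictly increasing in β. Hence, under label noise, larger positive-class weights β strictly increase the optimal predicted edge probability at non-edge pixels (more false positives). -/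
open Real

/-- Gibbs-type inequality: `p log h* + q log(1-h*) ≥ p log h + q log(1-h)` for
`h* = p/(p+q)`. -/
lemma gibbs_min (p q h : ℝ) (hp : 0 < p) (hq : 0 < q) (h0 : 0 < h) (h1 : h < 1) :
    p * Real.log h + q * Real.log (1 - h)
      ≤ p * Real.log (p / (p + q)) + q * Real.log (q / (p + q)) := by
  have hpq : 0 < p + q := by linarith
  have hstar : p / (p + q) > 0 := div_pos hp hpq
  have h1h : 0 < 1 - h := by linarith
  have key1 : Real.log h - Real.log (p / (p + q)) ≤ h * (p + q) / p - 1 := by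
    have := Real.log_le_sub_one_of_pos (show 0 < h / (p / (p + q)) from div_pos h0 hstar)
    rw [Real.log_div (ne_of_gt h0) (ne_of_gt hstar)] at this
    have : Real.log h - Real.log (p / (p + q)) ≤ h / (p / (p + q)) - 1 := this
    have e : h / (p / (p + q)) = h * (p + q) / p := by
      field_simp
    linarith [e ▸ this]
  have hq' : q / (p + q) > 0 := div_pos hq hpq
  have key2 : Real.log (1 - h) - Real.log (q / (p + q)) ≤ (1 - h) * (p + q) / q - 1 := by
    have := Real.log_le_sub_one_of_pos (show 0 < (1 - h) / (q / (p + q)) from div_pos h1h hq')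
    rw [Real.log_div (ne_of_gt h1h) (ne_of_gt hq')] at this
    have e : (1 - h) / (q / (p + q)) = (1 - h) * (p + q) / q := by
      field_simp
    linarith [e ▸ this]
  have c1 : p * (Real.log h - Real.log (p / (p + q))) ≤ p * (h * (p + q) / p - 1) :=
    mul_le_mul_of_nonneg_left key1 hp.le
  have c2 : q * (Real.log (1 - h) - Real.log (q / (p + q))) ≤ q * ((1 - h) * (p + q) / q - 1) :=
    mul_le_mul_of_nonneg_left key2 hq.le
  have e1 : p * (h * (p + q) / p - 1) = h * (p + q) - p := by field_simp
  have e2 : q * ((1 - h) * (p + q) / q - 1) = (1 - h) * (p + q) - q := by field_simp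
  nlinarith [c1, c2]

/-- under label-flip noise rate `ε`, the weighted cross-entropy with
positive-class weight `β > 1` has optimal prediction `h* = βε/(βε + 1 - ε)` at a true
non-edge pixel, and `h*` is strictly increasing in `β`. -/
theorem weighted_ce_noisy_minimizer (β ε : ℝ) (hβ : 1 < β) (hε : ε ∈ Set.Ioo (0 : ℝ) 1) :
    (β * ε / (β * ε + 1 - ε) ∈ Set.Ioo (0 : ℝ) 1)
    ∧ (∀ h ∈ Set.Ioo (0 : ℝ) 1,
        ε * (-(β * Real.log (β * ε / (β * ε + 1 - ε))))
          + (1 - ε) * (-Real.log (1 - β * ε / (β * ε + 1 - ε)))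
        ≤ ε * (-(β * Real.log h)) + (1 - ε) * (-Real.log (1 - h)))
    ∧ (∀ β' : ℝ, β < β' →
        β * ε / (β * ε + 1 - ε) < β' * ε / (β' * ε + 1 - ε)) := by
  obtain ⟨hε0, hε1⟩ := hε
  set p := β * ε with hp_def
  set q := 1 - ε with hq_def
  have hp : 0 < p := by positivity
  have hq : 0 < q := by linarith
  have hD : 0 < p + q := by linarith
  have hDe : β * ε + 1 - ε = p + q := by ring
  have hmem : β * ε / (β * ε + 1 - ε) ∈ Set.Ioo (0 : ℝ) 1 := by
    rw [hDe]
    constructor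
    · exact div_pos hp hD
    · rw [div_lt_one hD]; linarith
  refine ⟨hmem, ?_, ?_⟩
  · intro h hh
    obtain ⟨h0, h1⟩ := hh
    have key := gibbs_min p q h hp hq h0 h1
    have e1 : 1 - β * ε / (β * ε + 1 - ε) = q / (p + q) := by
      rw [hDe]; field_simp; linarith
    rw [e1, hDe]
    have e2 : ε * (-(β * Real.log (p / (p + q)))) = -(p * Real.log (p / (p + q))) := by
      rw [hp_def]; ring
    have e3 : ε * (-(β * Real.log h)) = -(p * Real.log h) := by rw [hp_def]; ring
    rw [e2, e3]
    simp only [mul_neg, ← hq_def]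
    linarith [key]
  · intro β' hlt
    have hD' : 0 < β' * ε + 1 - ε := by nlinarith
    rw [div_lt_div_iff₀ (by rw [hDe]; exact hD) hD']
    nlinarith [mul_pos (mul_pos hε0 (sub_pos.mpr hε1)) (sub_pos.mpr hlt)]
end
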